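/- Fix λ ∈ ℝ and set λ⁺ := max(λ,0) and λ⁻ := −min(λ,0). For bounded measurable q and bounded measurable τ ≥ 0 define L(τ,q,π) := (1/(1−γ))·E_μ[τ(s,a)·(r(s,a) + γ·(P^π q)(s,a) − q(s,a))] + q(s⁰,π) and ξ(G,τ) := E_μ[G(τ(s,a))]/(1−γ). Let Q be a nonempty collection of measurable functions on S × A uniformly bounded in absolute value by V̄ with q^π ∈ Q. Then for every bounded measurable τ : S × A → [0,∞): inf_{q∈Q} L(τ,q,π) − λ⁻·ξ(G,τ) ≤ J(π) ≤ sup_{q∈Q} L(τ,q,π) + λ⁺·ξ(G,τ); in particular, for any nonempty collection Ω of bounded measurable nonnegative functions on S × A, J⁻(π) := sup_{τ∈Ω}(inf_{q∈Q} L(τ,q,π) − λ⁻·ξ(G,τ)) ≤ J(π) ≤ inf_{τ∈Ω}(sup_{q∈Q} L(τ,q,π) + λ⁺·ξ(G,τ)) =: J⁺(π). (Validity of the value interval.) -/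

import Mathlib

open MeasureTheory ProbabilityTheory

/-- `q(s,π) := ∫_A q(s,a) π(da|s)`. -/
noncomputable def actInt {S A : Type*} [MeasurableSpace S] [MeasurableSpace A]
    (π : Kernel S A) (q : S × A → ℝ) (s : S) : ℝ :=
  ∫ a, q (s, a) ∂(π s)

/-- `(P^π q)(s,a) := ∫_S q(s',π) P(ds'|s,a)`. -/
noncomputable def bellOp {S A : Type*} [MeasurableSpace S] [MeasurableSpace A]
    (P : Kernel (S × A) S) (π : Kernel S A) (q : S × A → ℝ) (sa : S × A) : ℝ :=
  ∫ s', actInt π q s' ∂(P sa)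

/-- `L(τ,q,π) := (1/(1−γ))·E_μ[τ(s,a)·(r(s,a) + γ·(P^π q)(s,a) − q(s,a))] + q(s⁰,π)`. -/
noncomputable def Lval {S A : Type*} [MeasurableSpace S] [MeasurableSpace A]
    (μ : Measure (S × A)) (γ : ℝ) (r : S × A → ℝ)
    (P : Kernel (S × A) S) (π : Kernel S A) (s0 : S) (τ q : S × A → ℝ) : ℝ :=
  (1 / (1 - γ)) * (∫ sa, τ sa * (r sa + γ * bellOp P π q sa - q sa) ∂μ) + actInt π q s0

/-- `ξ(G,τ) := E_μ[G(τ(s,a))]/(1−γ)`. -/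
noncomputable def xiG {S A : Type*} [MeasurableSpace S] [MeasurableSpace A]
    (μ : Measure (S × A)) (γ : ℝ) (G : ℝ → ℝ) (τ : S × A → ℝ) : ℝ :=
  (∫ sa, G (τ sa) ∂μ) / (1 - γ)


private lemma abs_integral_le_of_abs_le {α : Type*} [MeasurableSpace α]
    (ν : MeasureTheory.Measure α) [MeasureTheory.IsProbabilityMeasure ν]
    (f : α → ℝ) (C : ℝ) (h : ∀ x, |f x| ≤ C) : |∫ x, f x ∂ν| ≤ C := by
  calc |∫ x, f x ∂ν| = ‖∫ x, f x ∂ν‖ := rfl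
    _ ≤ C * (ν Set.univ).toReal := by
        apply norm_integral_le_of_norm_le_const
        filter_upwards with x
        simpa using h x
    _ = C := by simp

/-- validity of the value interval. -/
theorem stmt_1
    {S A : Type*} [MeasurableSpace S] [MeasurableSpace A]
    (γ : ℝ) (hγ0 : 0 ≤ γ) (hγ1 : γ < 1)
    (r : S × A → ℝ) (hr_meas : Measurable r) (Br : ℝ) (hr_bdd : ∀ sa, |r sa| ≤ Br)
    (P : Kernel (S × A) S) [IsMarkovKernel P]
    (π : Kernel S A) [IsMarkovKernel π]
    (s0 : S)
    (μ : Measure (S × A)) [IsProbabilityMeasure μ]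
    (qpi : S × A → ℝ) (hq_meas : Measurable qpi)
    (hBellman : ∀ sa, qpi sa = r sa + γ * bellOp P π qpi sa)
    (G : ℝ → ℝ) (M : ℝ) (hM : 0 < M)
    (hG_diff : Differentiable ℝ G)
    (hG_conv : ConvexOn ℝ Set.univ (fun x => G x - M / 2 * x ^ 2))
    (hG_nonneg : ∀ x, 0 ≤ G x) (hG_one : G 1 = 0)
    (lam : ℝ)
    (V : ℝ) (hV : 0 < V)
    (Qset : Set (S × A → ℝ))
    (hQ_meas : ∀ q ∈ Qset, Measurable q)
    (hQ_bdd : ∀ q ∈ Qset, ∀ sa, |q sa| ≤ V)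
    (hqpiQ : qpi ∈ Qset) :
    (∀ τ : S × A → ℝ, Measurable τ → (∀ sa, 0 ≤ τ sa) → (∃ B, ∀ sa, τ sa ≤ B) →
      (⨅ q : Qset, Lval μ γ r P π s0 τ q.1) - (-(min lam 0)) * xiG μ γ G τ
          ≤ actInt π qpi s0
        ∧ actInt π qpi s0
          ≤ (⨆ q : Qset, Lval μ γ r P π s0 τ q.1) + (max lam 0) * xiG μ γ G τ)
    ∧ (∀ Ωset : Set (S × A → ℝ), Ωset.Nonempty →
        (∀ τ ∈ Ωset, Measurable τ ∧ (∀ sa, 0 ≤ τ sa) ∧ ∃ B, ∀ sa, τ sa ≤ B) →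
        (⨆ τ : Ωset,
            ((⨅ q : Qset, Lval μ γ r P π s0 τ.1 q.1) - (-(min lam 0)) * xiG μ γ G τ.1))
            ≤ actInt π qpi s0
          ∧ actInt π qpi s0
            ≤ ⨅ τ : Ωset,
                ((⨆ q : Qset, Lval μ γ r P π s0 τ.1 q.1) + (max lam 0) * xiG μ γ G τ.1)) := by

  have hγ : (0:ℝ) < 1 - γ := by linarith
  -- L(τ, qpi) = J
  have hL : ∀ τ : S × A → ℝ, Lval μ γ r P π s0 τ qpi = actInt π qpi s0 := by
    intro τ
    unfold Lval
    have h0 : ∀ sa, τ sa * (r sa + γ * bellOp P π qpi sa - qpi sa) = 0 := by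
      intro sa; rw [hBellman sa]; ring
    simp [h0]
  -- nonnegativity facts
  have hxi : ∀ τ : S × A → ℝ, 0 ≤ xiG μ γ G τ := by
    intro τ
    exact div_nonneg (integral_nonneg fun sa => hG_nonneg _) hγ.le
  have hlm : 0 ≤ -(min lam 0) := neg_nonneg.mpr (min_le_right lam 0)
  have hlp : 0 ≤ max lam 0 := le_max_right lam 0
  -- uniform bound on Lval over Qset
  have hbound : ∀ (τ : S × A → ℝ) (B : ℝ), (∀ sa, 0 ≤ τ sa) → (∀ sa, τ sa ≤ B) →
      ∀ q ∈ Qset, |Lval μ γ r P π s0 τ q| ≤ (1 / (1 - γ)) * (max B 0 * (max Br 0 + V + V)) + V := by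
    intro τ B hτ0 hτB q hq
    have hV' : ∀ s, |actInt π q s| ≤ V := by
      intro s
      exact abs_integral_le_of_abs_le (π s) _ V fun a => hQ_bdd q hq (s, a)
    have hbell : ∀ sa, |bellOp P π q sa| ≤ V := by
      intro sa
      exact abs_integral_le_of_abs_le (P sa) _ V fun s' => hV' s'
    have hBr0 : 0 ≤ max Br 0 := le_max_right _ _
    have hB0 : (0:ℝ) ≤ max B 0 := le_max_right _ _
    have hint : |∫ sa, τ sa * (r sa + γ * bellOp P π q sa - q sa) ∂μ| ≤ max B 0 * (max Br 0 + V + V) := by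
      apply abs_integral_le_of_abs_le
      intro sa
      rw [abs_mul, abs_of_nonneg (hτ0 sa)]
      apply mul_le_mul ((hτB sa).trans (le_max_left _ _)) _ (abs_nonneg _) hB0
      calc |r sa + γ * bellOp P π q sa - q sa|
          ≤ |r sa + γ * bellOp P π q sa| + |q sa| := abs_sub _ _
        _ ≤ |r sa| + |γ * bellOp P π q sa| + |q sa| :=
            add_le_add_left (abs_add_le _ _) _
        _ ≤ max Br 0 + V + V := by
            have h1 : |γ * bellOp P π q sa| ≤ V := by
              rw [abs_mul, abs_of_nonneg hγ0]
              calc γ * |bellOp P π q sa| ≤ 1 * V :=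
                    mul_le_mul hγ1.le (hbell sa) (abs_nonneg _) zero_le_one
                _ = V := one_mul V
            linarith [(hr_bdd sa).trans (le_max_left Br 0), h1, hQ_bdd q hq sa]
    unfold Lval
    calc |(1 / (1 - γ)) * (∫ sa, τ sa * (r sa + γ * bellOp P π q sa - q sa) ∂μ) + actInt π q s0|
        ≤ |(1 / (1 - γ))| * |∫ sa, τ sa * (r sa + γ * bellOp P π q sa - q sa) ∂μ| + |actInt π q s0| := by
          refine (abs_add_le _ _).trans ?_
          rw [abs_mul]
      _ ≤ (1 / (1 - γ)) * (max B 0 * (max Br 0 + V + V)) + V := by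
          have h1 : |(1 / (1 - γ))| = 1 / (1 - γ) := abs_of_pos (by positivity)
          rw [h1]
          have := hV' s0
          have h2 : (0:ℝ) ≤ 1 / (1 - γ) := by positivity
          nlinarith [hint, hV' s0]
  -- Key inequality for each admissible τ
  have key : ∀ τ : S × A → ℝ, (∀ sa, 0 ≤ τ sa) → (∃ B, ∀ sa, τ sa ≤ B) →
      (⨅ q : Qset, Lval μ γ r P π s0 τ q.1) ≤ actInt π qpi s0
        ∧ actInt π qpi s0 ≤ ⨆ q : Qset, Lval μ γ r P π s0 τ q.1 := by
    intro τ hτ0 ⟨B, hτB⟩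
    set K := (1 / (1 - γ)) * (max B 0 * (max Br 0 + V + V)) + V with hK
    have hbb : BddBelow (Set.range fun q : Qset => Lval μ γ r P π s0 τ q.1) := by
      refine ⟨-K, ?_⟩
      rintro x ⟨q, rfl⟩
      have := hbound τ B hτ0 hτB q.1 q.2
      exact neg_le_of_abs_le this
    have hba : BddAbove (Set.range fun q : Qset => Lval μ γ r P π s0 τ q.1) := by
      refine ⟨K, ?_⟩
      rintro x ⟨q, rfl⟩
      exact le_of_abs_le (hbound τ B hτ0 hτB q.1 q.2)
    constructor
    · have := ciInf_le hbb (⟨qpi, hqpiQ⟩ : Qset)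
      rwa [hL τ] at this
    · have := le_ciSup hba (⟨qpi, hqpiQ⟩ : Qset)
      rwa [hL τ] at this
  have part1 : ∀ τ : S × A → ℝ, Measurable τ → (∀ sa, 0 ≤ τ sa) → (∃ B, ∀ sa, τ sa ≤ B) →
      (⨅ q : Qset, Lval μ γ r P π s0 τ q.1) - (-(min lam 0)) * xiG μ γ G τ
          ≤ actInt π qpi s0
        ∧ actInt π qpi s0
          ≤ (⨆ q : Qset, Lval μ γ r P π s0 τ q.1) + (max lam 0) * xiG μ γ G τ := by
    intro τ hτm hτ0 hτB
    obtain ⟨h1, h2⟩ := key τ hτ0 hτB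
    have c1 : 0 ≤ (-(min lam 0)) * xiG μ γ G τ := mul_nonneg hlm (hxi τ)
    have c2 : 0 ≤ (max lam 0) * xiG μ γ G τ := mul_nonneg hlp (hxi τ)
    constructor <;> linarith
  refine ⟨part1, ?_⟩
  intro Ωset hne hΩ
  haveI : Nonempty Ωset := hne.to_subtype
  constructor
  · apply ciSup_le
    intro τ
    obtain ⟨hm, h0, hB⟩ := hΩ τ.1 τ.2
    exact (part1 τ.1 hm h0 hB).1
  · apply le_ciInf
    intro τ
    obtain ⟨hm, h0, hB⟩ := hΩ τ.1 τ.2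
    exact (part1 τ.1 hm h0 hB).2
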